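/- Let D be a triangulated category with a bounded co-t-structure (D_{\ge 0}, D_{\le 0}) and coheart S = D_{\ge 0} \cap D_{\le 0}. Then S is a silting subcategory: S is closed under direct summands, Hom(S, S'[k]) = 0 for all S, S' in S and all k > 0, and S generates D as a triangulated category closed under direct summands. -/

import Mathlib

open CategoryTheory Limits Pretriangulated

/-- A co-`t`-structure on a triangulated category: a pair of full additive subcategories
(given by iso-closed predicates) closed under direct summands, with the shift, orthogonality
and decomposition-triangle axioms. -/
structure CoTStructure (C : Type*) [Category C] [Preadditive C] [HasZeroObject C]
    [HasShift C ℤ] [∀ n : ℤ, (shiftFunctor C n).Additive] [Pretriangulated C] where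
  ge : C → Prop
  le : C → Prop
  ge_iso : ∀ {X Y : C}, (X ≅ Y) → ge X → ge Y
  le_iso : ∀ {X Y : C}, (X ≅ Y) → le X → le Y
  ge_summand : ∀ X Y : C, ge (X ⊞ Y) → ge X
  le_summand : ∀ X Y : C, le (X ⊞ Y) → le X
  ge_shift : ∀ X : C, ge X → ge (X⟦(-1 : ℤ)⟧)
  le_shift : ∀ X : C, le X → le (X⟦(1 : ℤ)⟧)
  hom_zero : ∀ A B : C, ge A → le B → ∀ f : A ⟶ B⟦(1 : ℤ)⟧, f = 0
  exists_triangle : ∀ X : C, ∃ (A B : C) (f : A ⟶ X) (g : X ⟶ B) (h : B ⟶ A⟦(1 : ℤ)⟧),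
    (Triangle.mk f g h ∈ distTriang C) ∧ ge A ∧ le (B⟦(-1 : ℤ)⟧)

namespace CoTAux

variable {C : Type*} [Category C] [Preadditive C] [HasZeroObject C] [HasShift C ℤ]
  [∀ n : ℤ, (shiftFunctor C n).Additive] [Pretriangulated C] (t : CoTStructure C)

lemma le_shift_nat (X : C) (a : ℤ) (h : t.le (X⟦a⟧)) : ∀ k : ℕ, t.le (X⟦a + (k : ℤ)⟧)
  | 0 => by simpa using h
  | (k + 1) => by
      have h' := t.le_shift _ (le_shift_nat X a h k)
      exact t.le_iso (((shiftFunctorAdd' C (a + (k : ℤ)) 1 (a + ((k : ℕ) + 1 : ℕ))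
        (by push_cast; ring)).app X).symm) h'

lemma le_mono (X : C) {a b : ℤ} (hab : a ≤ b) (h : t.le (X⟦a⟧)) : t.le (X⟦b⟧) := by
  have := le_shift_nat t X a h (b - a).toNat
  rwa [show a + ((b - a).toNat : ℤ) = b by omega] at this

lemma ge_shift_nat (X : C) (a : ℤ) (h : t.ge (X⟦a⟧)) : ∀ k : ℕ, t.ge (X⟦a - (k : ℤ)⟧)
  | 0 => by simpa using h
  | (k + 1) => by
      have h' := t.ge_shift _ (ge_shift_nat X a h k)
      exact t.ge_iso (((shiftFunctorAdd' C (a - (k : ℤ)) (-1) (a - ((k : ℕ) + 1 : ℕ))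
        (by push_cast; ring)).app X).symm) h'

lemma ge_anti (X : C) {a b : ℤ} (hab : a ≤ b) (h : t.ge (X⟦b⟧)) : t.ge (X⟦a⟧) := by
  have := ge_shift_nat t X b h (b - a).toNat
  rwa [show b - ((b - a).toNat : ℤ) = a by omega] at this

lemma le_zero (X : C) (h : t.le X) : t.le (X⟦(0 : ℤ)⟧) :=
  t.le_iso ((shiftFunctorZero C ℤ).app X).symm h

lemma ge_zero (X : C) (h : t.ge X) : t.ge (X⟦(0 : ℤ)⟧) :=
  t.ge_iso ((shiftFunctorZero C ℤ).app X).symm h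

lemma hom_zero' {A B : C} (hA : t.ge A) (hB : t.le B) (n : ℤ) (hn : 1 ≤ n)
    (f : A ⟶ B⟦n⟧) : f = 0 := by
  have hB' : t.le (B⟦n - 1⟧) := le_mono t B (by omega) (le_zero t B hB)
  have e := (shiftFunctorAdd' C (n - 1) 1 n (by ring)).app B
  have h0 : f ≫ e.hom = 0 := t.hom_zero A (B⟦n - 1⟧) hA hB' (f ≫ e.hom)
  calc f = (f ≫ e.hom) ≫ e.inv := by simp
  _ = 0 := by rw [h0]; simp

lemma iso_split₃ {T : Triangle C} (hT : T ∈ distTriang C) (h : T.mor₁ = 0) :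
    Nonempty (T.obj₃ ≅ T.obj₂ ⊞ (T.obj₁⟦(1 : ℤ)⟧)) := by
  obtain ⟨e, -⟩ := exists_iso_binaryBiproduct_of_distTriang _ (rot_of_distTriang _ hT)
    (by simp only [Triangle.rotate_mor₃, h, Functor.map_zero, neg_zero]; rfl)
  exact ⟨e⟩

lemma iso_split₁ {T : Triangle C} (hT : T ∈ distTriang C) (h : T.mor₂ = 0) :
    Nonempty (T.obj₁ ≅ (T.obj₃⟦(-1 : ℤ)⟧) ⊞ T.obj₂) := by
  obtain ⟨e, -⟩ := exists_iso_binaryBiproduct_of_distTriang _ (inv_rot_of_distTriang _ hT)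
    (by simp only [Triangle.invRotate_mor₃, h]; exact Limits.zero_comp)
  exact ⟨e⟩

lemma le_of_forall (X : C) (hX : ∀ A : C, t.ge A → ∀ f : A ⟶ X⟦(1 : ℤ)⟧, f = 0) :
    t.le X := by
  obtain ⟨A, B, f, g, h, hT, hA, hB⟩ := t.exists_triangle (X⟦(1 : ℤ)⟧)
  have hf : f = 0 := hX A hA f
  obtain ⟨e⟩ := iso_split₃ hT hf
  haveI : PreservesBinaryBiproducts (shiftFunctor C (-1 : ℤ)) :=
    preservesBinaryBiproducts_of_preservesBiproducts _
  have h1 : t.le ((X⟦(1 : ℤ)⟧ ⊞ (A⟦(1 : ℤ)⟧))⟦(-1 : ℤ)⟧) :=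
    t.le_iso ((shiftFunctor C (-1 : ℤ)).mapIso e) hB
  have h2 : t.le ((X⟦(1 : ℤ)⟧)⟦(-1 : ℤ)⟧ ⊞ (A⟦(1 : ℤ)⟧)⟦(-1 : ℤ)⟧) :=
    t.le_iso ((shiftFunctor C (-1 : ℤ)).mapBiprod _ _) h1
  have h3 : t.le (X ⊞ (A⟦(1 : ℤ)⟧)⟦(-1 : ℤ)⟧) :=
    t.le_iso (biprod.mapIso ((shiftFunctorCompIsoId C 1 (-1) (by ring)).app X)
      (Iso.refl _)) h2
  exact t.le_summand _ _ h3

lemma ge_of_forall (X : C) (hX : ∀ B : C, t.le B → ∀ f : X ⟶ B⟦(1 : ℤ)⟧, f = 0) :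
    t.ge X := by
  obtain ⟨A, B, f, g, h, hT, hA, hB⟩ := t.exists_triangle X
  have hg : g = 0 := by
    have e := (shiftFunctorCompIsoId C (-1 : ℤ) 1 (by ring)).app B
    have h0 : g ≫ e.inv = 0 := hX _ hB (g ≫ e.inv)
    calc g = (g ≫ e.inv) ≫ e.hom := by simp
    _ = 0 := by rw [h0]; simp
  obtain ⟨e⟩ := iso_split₁ hT hg
  have h1 : t.ge ((B⟦(-1 : ℤ)⟧) ⊞ X) := t.ge_iso e hA
  have h2 : t.ge (X ⊞ (B⟦(-1 : ℤ)⟧)) := t.ge_iso (biprod.braiding _ _) h1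
  exact t.ge_summand _ _ h2

lemma le_ext {T : Triangle C} (hT : T ∈ distTriang C) (h1 : t.le T.obj₁)
    (h3 : t.le T.obj₃) : t.le T.obj₂ := by
  apply le_of_forall
  intro A hA f
  have hT' := rot_of_distTriang _ (rot_of_distTriang _ hT)
  have hcomp : f ≫ (T.rotate.rotate).mor₃ = 0 := by
    have : f ≫ (T.mor₂⟦(1 : ℤ)⟧') = 0 := hom_zero' t hA h3 1 le_rfl _
    show f ≫ (-((shiftFunctor C (1 : ℤ)).map T.mor₂)) = 0
    rw [Preadditive.comp_neg, this, neg_zero]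
  obtain ⟨g, hg⟩ := Triangle.coyoneda_exact₃ _ hT' f hcomp
  rw [hg, hom_zero' t hA h1 1 le_rfl g]
  exact Limits.zero_comp

lemma ge_ext {T : Triangle C} (hT : T ∈ distTriang C) (h1 : t.ge T.obj₁)
    (h3 : t.ge T.obj₃) : t.ge T.obj₂ := by
  apply ge_of_forall
  intro B hB f
  have hcomp : T.mor₁ ≫ f = 0 := hom_zero' t h1 hB 1 le_rfl _
  obtain ⟨g, hg⟩ := Triangle.yoneda_exact₂ _ hT f hcomp
  rw [hg, hom_zero' t h3 hB 1 le_rfl g, comp_zero]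

lemma gen (P : C → Prop)
    (hiso : ∀ {X Y : C}, (X ≅ Y) → P X → P Y)
    (hshift : ∀ (X : C) (n : ℤ), P X → P (X⟦n⟧))
    (htri : ∀ T : Triangle C, (T ∈ distTriang C) → P T.obj₁ → P T.obj₂ → P T.obj₃)
    (hcoheart : ∀ X : C, t.ge X → t.le X → P X) :
    ∀ (k : ℕ) (X : C), t.ge X → t.le (X⟦(k : ℤ)⟧) → P X := by
  intro k
  induction k with
  | zero =>
    intro X hge hle
    exact hcoheart X hge (t.le_iso ((shiftFunctorZero C ℤ).app X) (by simpa using hle))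
  | succ k ih =>
    intro X hge hle
    set m : ℤ := (k : ℤ) + 1 with hm
    have hmle : t.le (X⟦m⟧) := by
      rwa [show (((k + 1 : ℕ)) : ℤ) = m by push_cast; ring] at hle
    obtain ⟨A, B, f, g, h, hT, hA, hB⟩ := t.exists_triangle (X⟦m⟧)
    have hleA : t.le A := le_ext t (inv_rot_of_distTriang _ hT) hB hmle
    have hPA : P A := hcoheart A hA hleA
    have hT₂ : (Triangle.shiftFunctor C (-m)).obj (Triangle.mk f g h) ∈ distTriang C :=
      Triangle.shift_distinguished _ hT (-m)
    have hgeXm : t.ge ((X⟦m⟧)⟦-m⟧) :=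
      t.ge_iso ((shiftFunctorCompIsoId C m (-m) (by ring)).app X).symm hge
    have hgeA1 : t.ge ((A⟦-m⟧)⟦(1 : ℤ)⟧) := by
      have h0 : t.ge (A⟦1 - m⟧) := ge_anti t A (by omega) (ge_zero t A hA)
      exact t.ge_iso ((shiftFunctorAdd' C (-m) 1 (1 - m) (by ring)).app A) h0
    have hgeB : t.ge (B⟦-m⟧) :=
      ge_ext t (rot_of_distTriang _ hT₂) hgeXm hgeA1
    have hleB : t.le ((B⟦-m⟧)⟦(k : ℤ)⟧) :=
      t.le_iso ((shiftFunctorAdd' C (-m) (k : ℤ) (-1) (by omega)).app B) hB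
    have hPB : P (B⟦-m⟧) := ih _ hgeB hleB
    have hPX' : P ((X⟦m⟧)⟦-m⟧) :=
      htri _ (inv_rot_of_distTriang _ hT₂) (hshift _ (-1) hPB) (hshift A (-m) hPA)
    exact hiso ((shiftFunctorCompIsoId C m (-m) (by ring)).app X) hPX'

end CoTAux

/-- The coheart of a bounded co-`t`-structure is a silting subcategory: it is closed under
direct summands, has no positively-shifted Homs between its objects, and generates `D` as
a triangulated category closed under direct summands (i.e. the smallest thick subcategory
containing the coheart is all of `D`). -/
theorem coheart_is_silting_subcategory
    {C : Type*} [Category C] [Preadditive C] [HasZeroObject C] [HasShift C ℤ]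
    [∀ n : ℤ, (shiftFunctor C n).Additive] [Pretriangulated C]
    (t : CoTStructure C)
    (hbdd₁ : ∀ X : C, ∃ n : ℤ, t.ge (X⟦n⟧))
    (hbdd₂ : ∀ X : C, ∃ n : ℤ, t.le (X⟦n⟧)) :
    (∀ X Y : C, t.ge (X ⊞ Y) → t.le (X ⊞ Y) → t.ge X ∧ t.le X) ∧
    (∀ X Y : C, t.ge X → t.le X → t.ge Y → t.le Y →
      ∀ k : ℤ, 0 < k → ∀ f : X ⟶ Y⟦k⟧, f = 0) ∧
    (∀ P : C → Prop,
      (∀ {X Y : C}, (X ≅ Y) → P X → P Y) →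
      (∀ X : C, IsZero X → P X) →
      (∀ (X : C) (n : ℤ), P X → P (X⟦n⟧)) →
      (∀ T : Triangle C, (T ∈ distTriang C) → P T.obj₁ → P T.obj₂ → P T.obj₃) →
      (∀ X Y : C, P (X ⊞ Y) → P X) →
      (∀ X : C, t.ge X → t.le X → P X) →
      ∀ X : C, P X) := by
  refine ⟨fun X Y h1 h2 => ⟨t.ge_summand X Y h1, t.le_summand X Y h2⟩, ?_, ?_⟩
  · intro X Y hgX hlX hgY hlY k hk f
    exact CoTAux.hom_zero' t hgX hlY k (by omega) f
  · intro P hiso hzero hshift htri hsummand hcoheart X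
    obtain ⟨a, ha⟩ := hbdd₁ X
    obtain ⟨b, hb⟩ := hbdd₂ X
    set a' : ℤ := min a b with ha'
    set b' : ℤ := max a b with hb'
    have hab : a' ≤ b' := le_trans (min_le_left a b) (le_max_left a b)
    have hge : t.ge (X⟦a'⟧) := CoTAux.ge_anti t X (min_le_left a b) ha
    have hle : t.le (X⟦b'⟧) := CoTAux.le_mono t X (le_max_right a b) hb
    have hle' : t.le ((X⟦a'⟧)⟦(((b' - a').toNat : ℤ))⟧) :=
      t.le_iso ((shiftFunctorAdd' C a' ((b' - a').toNat : ℤ) b' (by omega)).app X) hle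
    have hP' : P (X⟦a'⟧) := CoTAux.gen t P hiso hshift htri hcoheart _ _ hge hle'
    have hP'' : P ((X⟦a'⟧)⟦-a'⟧) := hshift _ (-a') hP'
    exact hiso ((shiftFunctorCompIsoId C a' (-a') (by ring)).app X) hP''
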